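/- Let p be a prime and let C = C_{c_0, c_1} ∈ M_2(F_p) be a 2×2 companion matrix over the field F_p with p elements. Then C is nil-clean if and only if (c_0 = 0 and c_1 = 0), or (c_0 = 1 and c_1 = −2), or c_1 = −1. -/

import Mathlib

/-- An element of a ring is *nil-clean* if it is the sum of an idempotent
and a nilpotent element. -/
def IsNilClean {R : Type*} [Ring R] (a : R) : Prop :=
  ∃ e n : R, e ^ 2 = e ∧ IsNilpotent n ∧ a = e + n

/-- The companion matrix `C_{c_0,...,c_{n-1}}`: entries `1` on the subdiagonal
(positions `(i+1, i)` for `1 ≤ i ≤ n-1`), last column `(-c_0, ..., -c_{n-1})ᵀ`,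
and `0` elsewhere. -/
def companionMatrix {R : Type*} [Ring R] (n : ℕ) (c : Fin n → R) :
    Matrix (Fin n) (Fin n) R :=
  Matrix.of fun i j =>
    if (i : ℕ) = (j : ℕ) + 1 then 1
    else if (j : ℕ) = n - 1 then -c i
    else 0

lemma companion_two_eq {R : Type*} [Ring R] (c₀ c₁ : R) :
    companionMatrix 2 ![c₀, c₁] = !![0, -c₀; 1, -c₁] := by
  ext i j
  fin_cases i <;> fin_cases j <;> simp [companionMatrix]

section helpers

variable {F : Type*} [Field F]

lemma nil_trace {N : Matrix (Fin 2) (Fin 2) F} (hN : IsNilpotent N) :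
    Matrix.trace N = 0 :=
  (Matrix.isNilpotent_trace_of_isNilpotent hN).eq_zero

lemma nil_det {N : Matrix (Fin 2) (Fin 2) F} (hN : IsNilpotent N) :
    Matrix.det N = 0 := by
  obtain ⟨k, hk⟩ := hN
  have h : Matrix.det N ^ k = Matrix.det (0 : Matrix (Fin 2) (Fin 2) F) := by
    rw [← Matrix.det_pow, hk]
  rw [Matrix.det_zero] at h
  rcases k with _ | k
  · simp at h
  · exact pow_eq_zero_iff (Nat.succ_ne_zero k) |>.mp h

end helpers


/-- A `2 × 2` companion matrix `C_{c_0, c_1}` over `𝔽_p` is nil-clean iff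
`c_0 = c_1 = 0`, or `c_0 = 1` and `c_1 = -2`, or `c_1 = -1`. -/
theorem stmt_19 {p : ℕ} (hp : p.Prime) [Fact p.Prime] (c₀ c₁ : ZMod p) :
    IsNilClean (companionMatrix 2 ![c₀, c₁]) ↔
      (c₀ = 0 ∧ c₁ = 0) ∨ (c₀ = 1 ∧ c₁ = -2) ∨ c₁ = -1 := by
  rw [companion_two_eq]
  constructor
  · rintro ⟨E, N, hE, hNnil, hsum⟩
    set a := E 0 0 with ha
    set b := E 0 1 with hb
    set c := E 1 0 with hc
    set d := E 1 1 with hd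
    have hEeta : E = !![a, b; c, d] := Matrix.eta_fin_two E
    have hNeq : N = !![-a, -c₀ - b; 1 - c, -c₁ - d] := by
      have h0 : N = !![0, -c₀; 1, -c₁] - E := by
        rw [hsum, add_sub_cancel_left]
      rw [h0, hEeta]
      ext i j
      fin_cases i <;> fin_cases j <;> simp [Matrix.sub_apply]
    have htr : -a + (-c₁ - d) = 0 := by
      have h := nil_trace hNnil
      rwa [hNeq, Matrix.trace_fin_two_of] at h
    have hdet : -a * (-c₁ - d) - (-c₀ - b) * (1 - c) = 0 := by
      have h := nil_det hNnil
      rwa [hNeq, Matrix.det_fin_two_of] at h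
    -- idempotent entry equations
    have hEE : (!![a, b; c, d] : Matrix (Fin 2) (Fin 2) (ZMod p)) * !![a, b; c, d]
        = !![a, b; c, d] := by
      rw [← hEeta, ← pow_two, hE]
    rw [Matrix.mul_fin_two] at hEE
    have h1 : a * a + b * c = a := by
      have := Matrix.ext_iff.2 hEE 0 0; simpa using this
    have h2 : a * b + b * d = b := by
      have := Matrix.ext_iff.2 hEE 0 1; simpa using this
    have h3 : c * a + d * c = c := by
      have := Matrix.ext_iff.2 hEE 1 0; simpa using this
    have h4 : c * b + d * d = d := by
      have := Matrix.ext_iff.2 hEE 1 1; simpa using this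
    have hc₁ : c₁ = -(a + d) := by linear_combination -htr
    by_cases hT : a + d = 1
    · right; right; rw [hc₁, hT]
    · -- b = 0 and c = 0
      have hT' : a + d - 1 ≠ 0 := fun h => hT (by linear_combination h)
      have hb0 : b = 0 := by
        have : b * (a + d - 1) = 0 := by linear_combination h2
        rcases mul_eq_zero.mp this with h | h
        · exact h
        · exact absurd h hT'
      have hc0 : c = 0 := by
        have : c * (a + d - 1) = 0 := by linear_combination h3
        rcases mul_eq_zero.mp this with h | h
        · exact h
        · exact absurd h hT'
      have ha01 : a = 0 ∨ a = 1 := by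
        have : a * (a - 1) = 0 := by linear_combination h1 - c * hb0
        rcases mul_eq_zero.mp this with h | h
        · exact Or.inl h
        · exact Or.inr (by linear_combination h)
      have hd01 : d = 0 ∨ d = 1 := by
        have : d * (d - 1) = 0 := by linear_combination h4 - c * hb0
        rcases mul_eq_zero.mp this with h | h
        · exact Or.inl h
        · exact Or.inr (by linear_combination h)
      rcases ha01 with ha0 | ha1 <;> rcases hd01 with hd0 | hd1
      · rw [ha0, hd0, hb0, hc0] at hdet
        rw [ha0, hd0] at hc₁
        exact Or.inl ⟨by linear_combination hdet, by rw [hc₁]; ring⟩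
      · exact absurd (by rw [ha0, hd1]; ring) hT'
      · exact absurd (by rw [ha1, hd0]; ring) hT'
      · rw [ha1, hd1, hb0, hc0] at hdet
        rw [ha1, hd1] at hc₁
        exact Or.inr (Or.inl ⟨by linear_combination hdet - hc₁, by rw [hc₁]; ring⟩)
  · rintro (⟨h0, h1⟩ | ⟨h0, h1⟩ | h1)
    · refine ⟨0, !![0, 0; 1, 0], by simp, ⟨2, ?_⟩, ?_⟩
      · rw [pow_two, Matrix.mul_fin_two]
        ext i j; fin_cases i <;> fin_cases j <;> simp
      · rw [h0, h1]; ext i j; fin_cases i <;> fin_cases j <;> simp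
    · refine ⟨1, !![-1, -1; 1, 1], by simp, ⟨2, ?_⟩, ?_⟩
      · rw [pow_two, Matrix.mul_fin_two]
        ext i j; fin_cases i <;> fin_cases j <;> simp
      · rw [h0, h1]
        ext i j
        fin_cases i <;> fin_cases j <;> simp [Matrix.one_apply] <;> norm_num
    · refine ⟨!![0, -c₀; 0, 1], !![0, 0; 1, 0], ?_, ⟨2, ?_⟩, ?_⟩
      · rw [pow_two, Matrix.mul_fin_two]
        ext i j; fin_cases i <;> fin_cases j <;> simp
      · rw [pow_two, Matrix.mul_fin_two]
        ext i j; fin_cases i <;> fin_cases j <;> simp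
      · rw [h1]
        ext i j
        fin_cases i <;> fin_cases j <;> simp
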